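/- Let (U, A, Z, X₁, X₂, Y) be a random vector taking values in a product of nonempty finite sets such that: (i) Z = g(A, X₁) almost surely for a deterministic function g; (ii) X₂ is conditionally independent of (X₁, Z) given (U, A); (iii) Y is conditionally independent of (U, A) given (X₁, X₂). Then H(Z | U, A) + I(X₁; Y | X₂, Z, U, A) ≤ H(Z | A, X₂) + I(X₁; Y | X₂, Z, A). -/
import Mathlib


open Finset

/-- Probability that the (finitely supported) random variable `X` takes the value `b`,
under the pmf `p` on the finite sample space `Ω`. -/
noncomputable def prob {Ω β : Type*} [Fintype Ω] (p : Ω → ℝ) (X : Ω → β) (b : β) : ℝ :=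
  haveI := Classical.propDecidable
  ∑ ω, if X ω = b then p ω else 0

/-- Shannon entropy `H(X)` (natural logarithm; any fixed base may be used). -/
noncomputable def ent {Ω β : Type*} [Fintype Ω] [Fintype β] (p : Ω → ℝ) (X : Ω → β) : ℝ :=
  -∑ b, prob p X b * Real.log (prob p X b)

/-- Conditional entropy `H(X|Y) = H(X,Y) - H(Y)`. -/
noncomputable def condEnt {Ω β γ : Type*} [Fintype Ω] [Fintype β] [Fintype γ]
    (p : Ω → ℝ) (X : Ω → β) (Y : Ω → γ) : ℝ :=
  ent p (fun ω => (X ω, Y ω)) - ent p Y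

/-- Mutual information `I(X;Y) = H(X) + H(Y) - H(X,Y)`. -/
noncomputable def mutInf {Ω β γ : Type*} [Fintype Ω] [Fintype β] [Fintype γ]
    (p : Ω → ℝ) (X : Ω → β) (Y : Ω → γ) : ℝ :=
  ent p X + ent p Y - ent p (fun ω => (X ω, Y ω))

/-- Conditional mutual information `I(X;Y|Z) = H(X|Z) + H(Y|Z) - H(X,Y|Z)`. -/
noncomputable def condMutInf {Ω β γ δ : Type*} [Fintype Ω] [Fintype β] [Fintype γ] [Fintype δ]
    (p : Ω → ℝ) (X : Ω → β) (Y : Ω → γ) (Z : Ω → δ) : ℝ :=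
  condEnt p X Z + condEnt p Y Z - condEnt p (fun ω => (X ω, Y ω)) Z

/-- `X` is conditionally independent of `Y` given `Z` (under the pmf `p`):
`P(X=x, Y=y, Z=z)·P(Z=z) = P(X=x, Z=z)·P(Y=y, Z=z)` for all `x, y, z`. -/
def CondIndepFun {Ω β γ δ : Type*} [Fintype Ω]
    (p : Ω → ℝ) (X : Ω → β) (Y : Ω → γ) (Z : Ω → δ) : Prop :=
  ∀ (x : β) (y : γ) (z : δ),
    prob p (fun ω => (X ω, Y ω, Z ω)) (x, y, z) * prob p Z z
      = prob p (fun ω => (X ω, Z ω)) (x, z) * prob p (fun ω => (Y ω, Z ω)) (y, z)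

section Helpers

variable {Ω : Type*} [Fintype Ω]

lemma prob_nonneg' {β : Type*} {p : Ω → ℝ} (hp0 : ∀ ω, 0 ≤ p ω) (X : Ω → β) (b : β) :
    0 ≤ prob p X b := by
  unfold prob
  exact Finset.sum_nonneg fun ω _ => by split <;> simp [hp0 ω]

lemma sum_prob' {β : Type*} [Fintype β] (p : Ω → ℝ) (X : Ω → β) :
    ∑ b, prob p X b = ∑ ω, p ω := by
  classical
  unfold prob
  rw [Finset.sum_comm]
  refine Finset.sum_congr rfl fun ω _ => ?_
  simp

lemma sum_prob_snd {β γ : Type*} [Fintype γ] (p : Ω → ℝ) (X : Ω → β) (Y : Ω → γ) (x : β) :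
    ∑ y, prob p (fun ω => (X ω, Y ω)) (x, y) = prob p X x := by
  classical
  unfold prob
  rw [Finset.sum_comm]
  refine Finset.sum_congr rfl fun ω _ => ?_
  by_cases h : X ω = x
  · simp [Prod.ext_iff, h]
  · simp [Prod.ext_iff, h]

lemma prob_comp_inj' {β γ : Type*} {p : Ω → ℝ} (φ : β → γ) (hφ : Function.Injective φ)
    {X : Ω → β} {X' : Ω → γ} (hX : ∀ ω, X' ω = φ (X ω)) (b : β) :
    prob p X' (φ b) = prob p X b := by
  classical
  unfold prob
  refine Finset.sum_congr rfl fun ω _ => ?_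
  refine if_congr ?_ rfl rfl
  rw [hX ω]
  exact hφ.eq_iff

lemma prob_marg_y {β γ δ : Type*} [Fintype γ] (p : Ω → ℝ)
    (X : Ω → β) (Y : Ω → γ) (W : Ω → δ) (x : β) (w : δ) :
    ∑ y, prob p (fun ω => (X ω, Y ω, W ω)) (x, y, w)
      = prob p (fun ω => (X ω, W ω)) (x, w) := by
  have key : ∀ y, prob p (fun ω => (X ω, Y ω, W ω)) (x, y, w)
      = prob p (fun ω => ((X ω, W ω), Y ω)) ((x, w), y) := by
    intro y
    exact (prob_comp_inj' (fun t : β × γ × δ => ((t.1, t.2.2), t.2.1))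
      (Function.LeftInverse.injective (g := fun s : (β × δ) × γ => (s.1.1, s.2, s.1.2))
        fun t => rfl)
      (X := fun ω => (X ω, Y ω, W ω)) (fun ω => rfl) (x, y, w)).symm
  simp only [key]
  exact sum_prob_snd p (fun ω => (X ω, W ω)) Y (x, w)

lemma prob_marg_x {β γ δ : Type*} [Fintype β] (p : Ω → ℝ)
    (X : Ω → β) (Y : Ω → γ) (W : Ω → δ) (y : γ) (w : δ) :
    ∑ x, prob p (fun ω => (X ω, Y ω, W ω)) (x, y, w)
      = prob p (fun ω => (Y ω, W ω)) (y, w) := by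
  have key : ∀ x, prob p (fun ω => (X ω, Y ω, W ω)) (x, y, w)
      = prob p (fun ω => ((Y ω, W ω), X ω)) ((y, w), x) := by
    intro x
    exact (prob_comp_inj' (fun t : β × γ × δ => ((t.2.1, t.2.2), t.1))
      (Function.LeftInverse.injective (g := fun s : (γ × δ) × β => (s.2, s.1.1, s.1.2))
        fun t => rfl)
      (X := fun ω => (X ω, Y ω, W ω)) (fun ω => rfl) (x, y, w)).symm
  simp only [key]
  exact sum_prob_snd p (fun ω => (Y ω, W ω)) X (y, w)

lemma prob_marg_xy {β γ δ : Type*} [Fintype β] [Fintype γ] (p : Ω → ℝ)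
    (X : Ω → β) (Y : Ω → γ) (W : Ω → δ) (w : δ) :
    ∑ x, ∑ y, prob p (fun ω => (X ω, Y ω, W ω)) (x, y, w) = prob p W w := by
  have key : ∀ x y, prob p (fun ω => (X ω, Y ω, W ω)) (x, y, w)
      = prob p (fun ω => (W ω, (X ω, Y ω))) (w, (x, y)) := by
    intro x y
    exact (prob_comp_inj' (fun t : β × γ × δ => (t.2.2, (t.1, t.2.1)))
      (Function.LeftInverse.injective (g := fun s : δ × β × γ => (s.2.1, s.2.2, s.1))
        fun t => rfl)
      (X := fun ω => (X ω, Y ω, W ω)) (fun ω => rfl) (x, y, w)).symm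
  simp only [key]
  exact (Fintype.sum_prod_type
      (f := fun q : β × γ => prob p (fun ω => (W ω, (X ω, Y ω))) (w, q))).symm.trans
    (sum_prob_snd p W (fun ω => (X ω, Y ω)) w)

lemma ci_marg {β γ₁ γ₂ δ : Type*} [Fintype γ₁] {p : Ω → ℝ}
    {X : Ω → β} {Y₁ : Ω → γ₁} {Y₂ : Ω → γ₂} {W : Ω → δ}
    (h : CondIndepFun p X (fun ω => (Y₁ ω, Y₂ ω)) W) :
    CondIndepFun p X Y₂ W := by
  intro x y₂ w
  have hs : ∑ y₁, prob p (fun ω => (X ω, (Y₁ ω, Y₂ ω), W ω)) (x, (y₁, y₂), w) * prob p W w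
      = ∑ y₁, prob p (fun ω => (X ω, W ω)) (x, w)
          * prob p (fun ω => ((Y₁ ω, Y₂ ω), W ω)) ((y₁, y₂), w) :=
    Finset.sum_congr rfl fun y₁ _ => h x (y₁, y₂) w
  rw [← Finset.sum_mul, ← Finset.mul_sum] at hs
  have m1 : ∑ y₁, prob p (fun ω => (X ω, (Y₁ ω, Y₂ ω), W ω)) (x, (y₁, y₂), w)
      = prob p (fun ω => (X ω, Y₂ ω, W ω)) (x, y₂, w) := by
    have key : ∀ y₁, prob p (fun ω => (X ω, (Y₁ ω, Y₂ ω), W ω)) (x, (y₁, y₂), w)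
        = prob p (fun ω => ((X ω, Y₂ ω, W ω), Y₁ ω)) ((x, y₂, w), y₁) := by
      intro y₁
      exact (prob_comp_inj' (fun t : β × (γ₁ × γ₂) × δ => ((t.1, t.2.1.2, t.2.2), t.2.1.1))
        (Function.LeftInverse.injective
          (g := fun s : (β × γ₂ × δ) × γ₁ => (s.1.1, (s.2, s.1.2.1), s.1.2.2)) fun t => rfl)
        (X := fun ω => (X ω, (Y₁ ω, Y₂ ω), W ω)) (fun ω => rfl) (x, (y₁, y₂), w)).symm
    simp only [key]
    exact sum_prob_snd p (fun ω => (X ω, Y₂ ω, W ω)) Y₁ (x, y₂, w)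
  have m2 : ∑ y₁, prob p (fun ω => ((Y₁ ω, Y₂ ω), W ω)) ((y₁, y₂), w)
      = prob p (fun ω => (Y₂ ω, W ω)) (y₂, w) := by
    have key : ∀ y₁, prob p (fun ω => ((Y₁ ω, Y₂ ω), W ω)) ((y₁, y₂), w)
        = prob p (fun ω => ((Y₂ ω, W ω), Y₁ ω)) ((y₂, w), y₁) := by
      intro y₁
      exact (prob_comp_inj' (fun t : (γ₁ × γ₂) × δ => ((t.1.2, t.2), t.1.1))
        (Function.LeftInverse.injective
          (g := fun s : (γ₂ × δ) × γ₁ => ((s.2, s.1.1), s.1.2)) fun t => rfl)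
        (X := fun ω => ((Y₁ ω, Y₂ ω), W ω)) (fun ω => rfl) ((y₁, y₂), w)).symm
    simp only [key]
    exact sum_prob_snd p (fun ω => (Y₂ ω, W ω)) Y₁ (y₂, w)
  rw [m1, m2] at hs
  exact hs

lemma exists_of_prob_ne_zero {β : Type*} {p : Ω → ℝ} {X : Ω → β} {b : β}
    (h : prob p X b ≠ 0) : ∃ ω, p ω ≠ 0 ∧ X ω = b := by
  by_contra hc
  push_neg at hc
  apply h
  unfold prob
  refine Finset.sum_eq_zero fun ω _ => ?_
  split
  · next h1 => by_contra h2; exact hc ω h2 h1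
  · rfl

lemma prob_congr_of_witness {β β' : Type*} {p : Ω → ℝ} {X : Ω → β} {X' : Ω → β'}
    (f : β → β') (g : β' → β)
    (hf : ∀ ω, p ω ≠ 0 → X' ω = f (X ω))
    (hg : ∀ ω, p ω ≠ 0 → X ω = g (X' ω))
    {b : β} {ω₀ : Ω} (hω₀ : p ω₀ ≠ 0) (hb : X ω₀ = b) :
    prob p X b = prob p X' (f b) := by
  classical
  unfold prob
  refine Finset.sum_congr rfl fun ω _ => ?_
  by_cases hω : p ω = 0
  · simp [hω]
  · refine if_congr ?_ rfl rfl
    constructor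
    · intro h; rw [hf ω hω, h]
    · intro h
      have : g (f b) = b := by
        conv_lhs => rw [← hb, ← hf ω₀ hω₀, ← hg ω₀ hω₀]
        exact hb
      rw [hg ω hω, h, this]

lemma ent_congr {β β' : Type*} [Fintype β] [Fintype β'] {p : Ω → ℝ}
    {X : Ω → β} {X' : Ω → β'} (f : β → β') (g : β' → β)
    (hf : ∀ ω, p ω ≠ 0 → X' ω = f (X ω))
    (hg : ∀ ω, p ω ≠ 0 → X ω = g (X' ω)) :
    ent p X = ent p X' := by
  classical
  unfold ent
  congr 1
  rw [← Finset.sum_filter_of_ne (p := fun b => prob p X b ≠ 0)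
      (by intro b _ h hb; exact h (by simp [hb])),
    ← Finset.sum_filter_of_ne (p := fun b => prob p X' b ≠ 0)
      (by intro b _ h hb; exact h (by simp [hb]))]
  refine Finset.sum_nbij' f g ?_ ?_ ?_ ?_ ?_
  · intro a ha
    simp only [mem_filter, mem_univ, true_and] at ha ⊢
    obtain ⟨ω₀, hω₀, hb⟩ := exists_of_prob_ne_zero ha
    rw [← prob_congr_of_witness f g hf hg hω₀ hb]; exact ha
  · intro b hb
    simp only [mem_filter, mem_univ, true_and] at hb ⊢
    obtain ⟨ω₀, hω₀, hb'⟩ := exists_of_prob_ne_zero hb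
    rw [← prob_congr_of_witness g f hg hf hω₀ hb']; exact hb
  · intro a ha
    simp only [mem_filter, mem_univ, true_and] at ha
    obtain ⟨ω₀, hω₀, hb⟩ := exists_of_prob_ne_zero ha
    rw [← hb, ← hf ω₀ hω₀, ← hg ω₀ hω₀]
  · intro b hb
    simp only [mem_filter, mem_univ, true_and] at hb
    obtain ⟨ω₀, hω₀, hb'⟩ := exists_of_prob_ne_zero hb
    rw [← hb', ← hg ω₀ hω₀, ← hf ω₀ hω₀]
  · intro a ha
    simp only [mem_filter, mem_univ, true_and] at ha
    obtain ⟨ω₀, hω₀, hb⟩ := exists_of_prob_ne_zero ha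
    rw [prob_congr_of_witness f g hf hg hω₀ hb]

lemma sum_prob_fst {β γ : Type*} [Fintype β] (p : Ω → ℝ) (X : Ω → β) (Y : Ω → γ) (y : γ) :
    ∑ x, prob p (fun ω => (X ω, Y ω)) (x, y) = prob p Y y := by
  have key : ∀ x, prob p (fun ω => (X ω, Y ω)) (x, y)
      = prob p (fun ω => (Y ω, X ω)) (y, x) := by
    intro x
    exact (prob_comp_inj' (fun t : β × γ => (t.2, t.1))
      (Function.LeftInverse.injective (g := fun s : γ × β => (s.2, s.1)) fun t => rfl)
      (X := fun ω => (X ω, Y ω)) (fun ω => rfl) (x, y)).symm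
  simp only [key]
  exact sum_prob_snd p Y X y

lemma sum_triple {α₁ α₂ α₃ : Type*} [Fintype α₁] [Fintype α₂] [Fintype α₃]
    (f : α₁ × α₂ × α₃ → ℝ) :
    ∑ t, f t = ∑ x, ∑ y, ∑ w, f (x, y, w) := by
  rw [Fintype.sum_prod_type]
  exact Finset.sum_congr rfl fun x _ => Fintype.sum_prod_type _

lemma sum3_fst {β γ δ : Type*} [Fintype β] [Fintype γ] [Fintype δ] (p : Ω → ℝ)
    (X : Ω → β) (Y : Ω → γ) (W : Ω → δ) (L : β → δ → ℝ) :
    ∑ x, ∑ y, ∑ w, prob p (fun ω => (X ω, Y ω, W ω)) (x, y, w) * L x w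
      = ∑ x, ∑ w, prob p (fun ω => (X ω, W ω)) (x, w) * L x w := by
  refine Finset.sum_congr rfl fun x _ => ?_
  rw [Finset.sum_comm]
  refine Finset.sum_congr rfl fun w _ => ?_
  rw [← Finset.sum_mul, prob_marg_y]

lemma sum3_snd {β γ δ : Type*} [Fintype β] [Fintype γ] [Fintype δ] (p : Ω → ℝ)
    (X : Ω → β) (Y : Ω → γ) (W : Ω → δ) (L : γ → δ → ℝ) :
    ∑ x, ∑ y, ∑ w, prob p (fun ω => (X ω, Y ω, W ω)) (x, y, w) * L y w
      = ∑ y, ∑ w, prob p (fun ω => (Y ω, W ω)) (y, w) * L y w := by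
  rw [Finset.sum_comm]
  refine Finset.sum_congr rfl fun y _ => ?_
  rw [Finset.sum_comm]
  refine Finset.sum_congr rfl fun w _ => ?_
  rw [← Finset.sum_mul, prob_marg_x]

lemma sum3_w {β γ δ : Type*} [Fintype β] [Fintype γ] [Fintype δ] (p : Ω → ℝ)
    (X : Ω → β) (Y : Ω → γ) (W : Ω → δ) (L : δ → ℝ) :
    ∑ x, ∑ y, ∑ w, prob p (fun ω => (X ω, Y ω, W ω)) (x, y, w) * L w
      = ∑ w, prob p W w * L w := by
  have h1 : ∀ x : β, ∑ y, ∑ w, prob p (fun ω => (X ω, Y ω, W ω)) (x, y, w) * L w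
      = ∑ w, ∑ y, prob p (fun ω => (X ω, Y ω, W ω)) (x, y, w) * L w :=
    fun x => Finset.sum_comm
  simp only [h1]
  rw [Finset.sum_comm]
  refine Finset.sum_congr rfl fun w _ => ?_
  have h2 : ∀ x : β, ∑ y, prob p (fun ω => (X ω, Y ω, W ω)) (x, y, w) * L w
      = (∑ y, prob p (fun ω => (X ω, Y ω, W ω)) (x, y, w)) * L w :=
    fun x => (Finset.sum_mul _ _ _).symm
  simp only [h2]
  rw [← Finset.sum_mul]
  rw [prob_marg_xy]

lemma prob_le_marg_y {β γ δ : Type*} [Fintype γ] {p : Ω → ℝ} (hp0 : ∀ ω, 0 ≤ p ω)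
    (X : Ω → β) (Y : Ω → γ) (W : Ω → δ) (x : β) (y : γ) (w : δ) :
    prob p (fun ω => (X ω, Y ω, W ω)) (x, y, w) ≤ prob p (fun ω => (X ω, W ω)) (x, w) := by
  rw [← prob_marg_y p X Y W x w]
  exact Finset.single_le_sum
    (f := fun y' => prob p (fun ω => (X ω, Y ω, W ω)) (x, y', w))
    (fun y' _ => prob_nonneg' hp0 _ _) (mem_univ y)

lemma prob_le_marg_x {β γ δ : Type*} [Fintype β] {p : Ω → ℝ} (hp0 : ∀ ω, 0 ≤ p ω)
    (X : Ω → β) (Y : Ω → γ) (W : Ω → δ) (x : β) (y : γ) (w : δ) :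
    prob p (fun ω => (X ω, Y ω, W ω)) (x, y, w) ≤ prob p (fun ω => (Y ω, W ω)) (y, w) := by
  rw [← prob_marg_x p X Y W y w]
  exact Finset.single_le_sum
    (f := fun x' => prob p (fun ω => (X ω, Y ω, W ω)) (x', y, w))
    (fun x' _ => prob_nonneg' hp0 _ _) (mem_univ x)

lemma prob_le_marg_w {β γ δ : Type*} [Fintype β] [Fintype γ] {p : Ω → ℝ} (hp0 : ∀ ω, 0 ≤ p ω)
    (X : Ω → β) (Y : Ω → γ) (W : Ω → δ) (x : β) (y : γ) (w : δ) :
    prob p (fun ω => (X ω, Y ω, W ω)) (x, y, w) ≤ prob p W w := by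
  rw [← prob_marg_xy p X Y W w]
  calc prob p (fun ω => (X ω, Y ω, W ω)) (x, y, w)
      ≤ ∑ y', prob p (fun ω => (X ω, Y ω, W ω)) (x, y', w) :=
        Finset.single_le_sum
          (f := fun y' => prob p (fun ω => (X ω, Y ω, W ω)) (x, y', w))
          (fun y' _ => prob_nonneg' hp0 _ _) (mem_univ y)
    _ ≤ _ := Finset.single_le_sum
        (f := fun x' => ∑ y', prob p (fun ω => (X ω, Y ω, W ω)) (x', y', w))
        (fun x' _ => Finset.sum_nonneg fun y' _ => prob_nonneg' hp0 _ _) (mem_univ x)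

lemma ci_ent {β γ δ : Type*} [Fintype β] [Fintype γ] [Fintype δ] {p : Ω → ℝ}
    (hp0 : ∀ ω, 0 ≤ p ω) (X : Ω → β) (Y : Ω → γ) (W : Ω → δ)
    (h : CondIndepFun p X Y W) :
    ent p (fun ω => (X ω, Y ω, W ω)) + ent p W
      = ent p (fun ω => (X ω, W ω)) + ent p (fun ω => (Y ω, W ω)) := by
  classical
  have key : ∀ x y w,
      prob p (fun ω => (X ω, Y ω, W ω)) (x, y, w)
          * Real.log (prob p (fun ω => (X ω, Y ω, W ω)) (x, y, w))
        = prob p (fun ω => (X ω, Y ω, W ω)) (x, y, w)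
            * (Real.log (prob p (fun ω => (X ω, W ω)) (x, w))
              + Real.log (prob p (fun ω => (Y ω, W ω)) (y, w))
              - Real.log (prob p W w)) := by
    intro x y w
    by_cases h0 : prob p (fun ω => (X ω, Y ω, W ω)) (x, y, w) = 0
    · rw [h0]; ring
    · have hpos : 0 < prob p (fun ω => (X ω, Y ω, W ω)) (x, y, w) :=
        lt_of_le_of_ne (prob_nonneg' hp0 _ _) (Ne.symm h0)
      have hxw : 0 < prob p (fun ω => (X ω, W ω)) (x, w) :=
        lt_of_lt_of_le hpos (prob_le_marg_y hp0 X Y W x y w)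
      have hyw : 0 < prob p (fun ω => (Y ω, W ω)) (y, w) :=
        lt_of_lt_of_le hpos (prob_le_marg_x hp0 X Y W x y w)
      have hw : 0 < prob p W w :=
        lt_of_lt_of_le hpos (prob_le_marg_w hp0 X Y W x y w)
      have hh := h x y w
      have hlog : Real.log (prob p (fun ω => (X ω, Y ω, W ω)) (x, y, w))
          + Real.log (prob p W w)
          = Real.log (prob p (fun ω => (X ω, W ω)) (x, w))
            + Real.log (prob p (fun ω => (Y ω, W ω)) (y, w)) := by
        rw [← Real.log_mul (ne_of_gt hpos) (ne_of_gt hw),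
          ← Real.log_mul (ne_of_gt hxw) (ne_of_gt hyw), hh]
      have : Real.log (prob p (fun ω => (X ω, Y ω, W ω)) (x, y, w))
          = Real.log (prob p (fun ω => (X ω, W ω)) (x, w))
            + Real.log (prob p (fun ω => (Y ω, W ω)) (y, w)) - Real.log (prob p W w) := by
        linarith
      rw [this]
  have main : ∑ t : β × γ × δ,
      prob p (fun ω => (X ω, Y ω, W ω)) t * Real.log (prob p (fun ω => (X ω, Y ω, W ω)) t)
      = (∑ s : β × δ, prob p (fun ω => (X ω, W ω)) s
            * Real.log (prob p (fun ω => (X ω, W ω)) s))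
        + (∑ s : γ × δ, prob p (fun ω => (Y ω, W ω)) s
            * Real.log (prob p (fun ω => (Y ω, W ω)) s))
        - ∑ w, prob p W w * Real.log (prob p W w) := by
    rw [sum_triple]
    have step1 : ∑ x, ∑ y, ∑ w,
        prob p (fun ω => (X ω, Y ω, W ω)) (x, y, w)
          * Real.log (prob p (fun ω => (X ω, Y ω, W ω)) (x, y, w))
        = ∑ x, ∑ y, ∑ w,
          (prob p (fun ω => (X ω, Y ω, W ω)) (x, y, w)
              * Real.log (prob p (fun ω => (X ω, W ω)) (x, w))
            + prob p (fun ω => (X ω, Y ω, W ω)) (x, y, w)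
              * Real.log (prob p (fun ω => (Y ω, W ω)) (y, w))
            - prob p (fun ω => (X ω, Y ω, W ω)) (x, y, w) * Real.log (prob p W w)) := by
      refine Finset.sum_congr rfl fun x _ => Finset.sum_congr rfl fun y _ =>
        Finset.sum_congr rfl fun w _ => ?_
      rw [key x y w]; ring
    rw [step1]
    simp only [Finset.sum_add_distrib, Finset.sum_sub_distrib]
    rw [sum3_fst p X Y W (fun x w => Real.log (prob p (fun ω => (X ω, W ω)) (x, w))),
      sum3_snd p X Y W (fun y w => Real.log (prob p (fun ω => (Y ω, W ω)) (y, w))),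
      sum3_w p X Y W (fun w => Real.log (prob p W w)),
      Fintype.sum_prod_type
        (f := fun s : β × δ => prob p (fun ω => (X ω, W ω)) s
          * Real.log (prob p (fun ω => (X ω, W ω)) s)),
      Fintype.sum_prod_type
        (f := fun s : γ × δ => prob p (fun ω => (Y ω, W ω)) s
          * Real.log (prob p (fun ω => (Y ω, W ω)) s))]
  unfold ent
  linarith [main]

set_option maxHeartbeats 1600000 in
lemma ssa {β γ δ : Type*} [Fintype β] [Fintype γ] [Fintype δ] {p : Ω → ℝ}
    (hp0 : ∀ ω, 0 ≤ p ω) (hp1 : ∑ ω, p ω = 1) (X : Ω → β) (Y : Ω → γ) (W : Ω → δ) :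
    ent p (fun ω => (X ω, Y ω, W ω)) + ent p W
      ≤ ent p (fun ω => (X ω, W ω)) + ent p (fun ω => (Y ω, W ω)) := by
  classical
  set B : β → γ → δ → ℝ := fun x y w =>
    if prob p W w = 0 then 0
    else prob p (fun ω => (X ω, W ω)) (x, w) * prob p (fun ω => (Y ω, W ω)) (y, w)
      / prob p W w with hB
  -- pointwise bound
  have key : ∀ x y w,
      prob p (fun ω => (X ω, Y ω, W ω)) (x, y, w)
          * (Real.log (prob p (fun ω => (X ω, W ω)) (x, w))
            + Real.log (prob p (fun ω => (Y ω, W ω)) (y, w))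
            - Real.log (prob p W w))
        - prob p (fun ω => (X ω, Y ω, W ω)) (x, y, w)
            * Real.log (prob p (fun ω => (X ω, Y ω, W ω)) (x, y, w))
      ≤ B x y w - prob p (fun ω => (X ω, Y ω, W ω)) (x, y, w) := by
    intro x y w
    by_cases h0 : prob p (fun ω => (X ω, Y ω, W ω)) (x, y, w) = 0
    · rw [h0]
      simp only [hB]
      split
      · simp
      · next hw =>
        have hw' : 0 < prob p W w := lt_of_le_of_ne (prob_nonneg' hp0 _ _) (Ne.symm hw)
        have : 0 ≤ prob p (fun ω => (X ω, W ω)) (x, w)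
            * prob p (fun ω => (Y ω, W ω)) (y, w) / prob p W w :=
          div_nonneg (mul_nonneg (prob_nonneg' hp0 _ _) (prob_nonneg' hp0 _ _)) (le_of_lt hw')
        simpa using this
    · have hpos : 0 < prob p (fun ω => (X ω, Y ω, W ω)) (x, y, w) :=
        lt_of_le_of_ne (prob_nonneg' hp0 _ _) (Ne.symm h0)
      have hxw : 0 < prob p (fun ω => (X ω, W ω)) (x, w) :=
        lt_of_lt_of_le hpos (prob_le_marg_y hp0 X Y W x y w)
      have hyw : 0 < prob p (fun ω => (Y ω, W ω)) (y, w) :=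
        lt_of_lt_of_le hpos (prob_le_marg_x hp0 X Y W x y w)
      have hw : 0 < prob p W w :=
        lt_of_lt_of_le hpos (prob_le_marg_w hp0 X Y W x y w)
      have hBval : B x y w = prob p (fun ω => (X ω, W ω)) (x, w)
          * prob p (fun ω => (Y ω, W ω)) (y, w) / prob p W w := by
        simp only [hB, if_neg (ne_of_gt hw)]
      have hBpos : 0 < B x y w := by
        rw [hBval]; exact div_pos (mul_pos hxw hyw) hw
      have hlogB : Real.log (B x y w)
          = Real.log (prob p (fun ω => (X ω, W ω)) (x, w))
            + Real.log (prob p (fun ω => (Y ω, W ω)) (y, w)) - Real.log (prob p W w) := by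
        rw [hBval, Real.log_div (ne_of_gt (mul_pos hxw hyw)) (ne_of_gt hw),
          Real.log_mul (ne_of_gt hxw) (ne_of_gt hyw)]
      rw [← hlogB]
      have hlog : Real.log (B x y w / prob p (fun ω => (X ω, Y ω, W ω)) (x, y, w))
          ≤ B x y w / prob p (fun ω => (X ω, Y ω, W ω)) (x, y, w) - 1 :=
        Real.log_le_sub_one_of_pos (div_pos hBpos hpos)
      rw [Real.log_div (ne_of_gt hBpos) (ne_of_gt hpos)] at hlog
      have := mul_le_mul_of_nonneg_left hlog (le_of_lt hpos)
      calc prob p (fun ω => (X ω, Y ω, W ω)) (x, y, w) * Real.log (B x y w)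
            - prob p (fun ω => (X ω, Y ω, W ω)) (x, y, w)
              * Real.log (prob p (fun ω => (X ω, Y ω, W ω)) (x, y, w))
          = prob p (fun ω => (X ω, Y ω, W ω)) (x, y, w)
              * (Real.log (B x y w)
                - Real.log (prob p (fun ω => (X ω, Y ω, W ω)) (x, y, w))) := by ring
        _ ≤ prob p (fun ω => (X ω, Y ω, W ω)) (x, y, w)
              * (B x y w / prob p (fun ω => (X ω, Y ω, W ω)) (x, y, w) - 1) := this
        _ = B x y w - prob p (fun ω => (X ω, Y ω, W ω)) (x, y, w) := by
              field_simp
  -- sum of B is at most 1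
  have sumB : ∑ x, ∑ y, ∑ w, B x y w ≤ 1 := by
    have h1 : ∀ x : β, ∑ y, ∑ w, B x y w = ∑ w, ∑ y, B x y w := fun x => Finset.sum_comm
    simp only [h1]
    rw [Finset.sum_comm]
    have inner : ∀ w, ∑ x, ∑ y, B x y w ≤ prob p W w := by
      intro w
      by_cases hw : prob p W w = 0
      · simp only [hB, if_pos hw]
        simp [prob_nonneg' hp0 W w]
      · have hw' : prob p W w ≠ 0 := hw
        simp only [hB, if_neg hw]
        have hy : ∀ x, ∑ y, prob p (fun ω => (X ω, W ω)) (x, w)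
            * prob p (fun ω => (Y ω, W ω)) (y, w) / prob p W w
            = prob p (fun ω => (X ω, W ω)) (x, w) := by
          intro x
          rw [← Finset.sum_div, ← Finset.mul_sum, sum_prob_fst p Y W w,
            mul_div_assoc, div_self hw', mul_one]
        simp only [hy]
        rw [sum_prob_fst p X W w]
    calc ∑ w, ∑ x, ∑ y, B x y w ≤ ∑ w, prob p W w :=
          Finset.sum_le_sum fun w _ => inner w
      _ = 1 := by rw [sum_prob' p W, hp1]
  -- sum of P3 is 1
  have sumP : ∑ x, ∑ y, ∑ w, prob p (fun ω => (X ω, Y ω, W ω)) (x, y, w) = 1 := by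
    rw [← sum_triple (fun t => prob p (fun ω => (X ω, Y ω, W ω)) t),
      sum_prob' p (fun ω => (X ω, Y ω, W ω)), hp1]
  -- main inequality on triple sums
  have main : ∑ x, ∑ y, ∑ w,
      (prob p (fun ω => (X ω, Y ω, W ω)) (x, y, w)
          * (Real.log (prob p (fun ω => (X ω, W ω)) (x, w))
            + Real.log (prob p (fun ω => (Y ω, W ω)) (y, w))
            - Real.log (prob p W w))
        - prob p (fun ω => (X ω, Y ω, W ω)) (x, y, w)
            * Real.log (prob p (fun ω => (X ω, Y ω, W ω)) (x, y, w))) ≤ 0 := by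
    calc ∑ x, ∑ y, ∑ w,
        (prob p (fun ω => (X ω, Y ω, W ω)) (x, y, w)
            * (Real.log (prob p (fun ω => (X ω, W ω)) (x, w))
              + Real.log (prob p (fun ω => (Y ω, W ω)) (y, w))
              - Real.log (prob p W w))
          - prob p (fun ω => (X ω, Y ω, W ω)) (x, y, w)
              * Real.log (prob p (fun ω => (X ω, Y ω, W ω)) (x, y, w)))
        ≤ ∑ x, ∑ y, ∑ w, (B x y w - prob p (fun ω => (X ω, Y ω, W ω)) (x, y, w)) := by
          refine Finset.sum_le_sum fun x _ => Finset.sum_le_sum fun y _ =>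
            Finset.sum_le_sum fun w _ => key x y w
      _ = (∑ x, ∑ y, ∑ w, B x y w)
            - ∑ x, ∑ y, ∑ w, prob p (fun ω => (X ω, Y ω, W ω)) (x, y, w) := by
          simp only [Finset.sum_sub_distrib]
      _ ≤ 1 - 1 := by rw [sumP]; linarith [sumB]
      _ = 0 := by ring
  -- expand main via marginal sums
  simp only [Finset.sum_sub_distrib] at main
  have e1 : ∑ x, ∑ y, ∑ w,
      prob p (fun ω => (X ω, Y ω, W ω)) (x, y, w)
        * (Real.log (prob p (fun ω => (X ω, W ω)) (x, w))
          + Real.log (prob p (fun ω => (Y ω, W ω)) (y, w))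
          - Real.log (prob p W w))
      = (∑ s : β × δ, prob p (fun ω => (X ω, W ω)) s
            * Real.log (prob p (fun ω => (X ω, W ω)) s))
        + (∑ s : γ × δ, prob p (fun ω => (Y ω, W ω)) s
            * Real.log (prob p (fun ω => (Y ω, W ω)) s))
        - ∑ w, prob p W w * Real.log (prob p W w) := by
    have expand : ∀ x y w,
        prob p (fun ω => (X ω, Y ω, W ω)) (x, y, w)
          * (Real.log (prob p (fun ω => (X ω, W ω)) (x, w))
            + Real.log (prob p (fun ω => (Y ω, W ω)) (y, w))
            - Real.log (prob p W w))
        = prob p (fun ω => (X ω, Y ω, W ω)) (x, y, w)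
            * Real.log (prob p (fun ω => (X ω, W ω)) (x, w))
          + prob p (fun ω => (X ω, Y ω, W ω)) (x, y, w)
            * Real.log (prob p (fun ω => (Y ω, W ω)) (y, w))
          - prob p (fun ω => (X ω, Y ω, W ω)) (x, y, w) * Real.log (prob p W w) := by
      intro x y w; ring
    simp only [expand, Finset.sum_add_distrib, Finset.sum_sub_distrib]
    rw [sum3_fst p X Y W (fun x w => Real.log (prob p (fun ω => (X ω, W ω)) (x, w))),
      sum3_snd p X Y W (fun y w => Real.log (prob p (fun ω => (Y ω, W ω)) (y, w))),
      sum3_w p X Y W (fun w => Real.log (prob p W w)),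
      Fintype.sum_prod_type
        (f := fun s : β × δ => prob p (fun ω => (X ω, W ω)) s
          * Real.log (prob p (fun ω => (X ω, W ω)) s)),
      Fintype.sum_prod_type
        (f := fun s : γ × δ => prob p (fun ω => (Y ω, W ω)) s
          * Real.log (prob p (fun ω => (Y ω, W ω)) s))]
  have e2 : ∑ x, ∑ y, ∑ w,
      prob p (fun ω => (X ω, Y ω, W ω)) (x, y, w)
        * Real.log (prob p (fun ω => (X ω, Y ω, W ω)) (x, y, w))
      = ∑ t : β × γ × δ, prob p (fun ω => (X ω, Y ω, W ω)) t
          * Real.log (prob p (fun ω => (X ω, Y ω, W ω)) t) :=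
    (sum_triple (fun t : β × γ × δ => prob p (fun ω => (X ω, Y ω, W ω)) t
      * Real.log (prob p (fun ω => (X ω, Y ω, W ω)) t))).symm
  rw [e1, e2] at main
  unfold ent
  linarith [main]

end Helpers

/-- For a random vector `(U, A, Z, X₁, X₂, Y)` over finite sets with
(i) `Z = g(A, X₁)` a.s., (ii) `X₂` conditionally independent of `(X₁, Z)` given `(U, A)`,
(iii) `Y` conditionally independent of `(U, A)` given `(X₁, X₂)`, one has
`H(Z|U,A) + I(X₁;Y|X₂,Z,U,A) ≤ H(Z|A,X₂) + I(X₁;Y|X₂,Z,A)`. -/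
theorem condEnt_add_condMutInf_le_actions
    {U A Z X₁ X₂ Y : Type*}
    [Fintype U] [Fintype A] [Fintype Z] [Fintype X₁] [Fintype X₂] [Fintype Y]
    [Nonempty U] [Nonempty A] [Nonempty Z] [Nonempty X₁] [Nonempty X₂] [Nonempty Y]
    (p : U × A × Z × X₁ × X₂ × Y → ℝ)
    (hp0 : ∀ ω, 0 ≤ p ω) (hp1 : ∑ ω, p ω = 1)
    (g : A → X₁ → Z)
    (hdet : ∀ ω, p ω ≠ 0 → ω.2.2.1 = g ω.2.1 ω.2.2.2.1)
    (hci1 : CondIndepFun p (fun ω => ω.2.2.2.2.1)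
      (fun ω => (ω.2.2.2.1, ω.2.2.1)) (fun ω => (ω.1, ω.2.1)))
    (hci2 : CondIndepFun p (fun ω => ω.2.2.2.2.2)
      (fun ω => (ω.1, ω.2.1)) (fun ω => (ω.2.2.2.1, ω.2.2.2.2.1))) :
    condEnt p (fun ω => ω.2.2.1) (fun ω => (ω.1, ω.2.1))
        + condMutInf p (fun ω => ω.2.2.2.1) (fun ω => ω.2.2.2.2.2)
            (fun ω => (ω.2.2.2.2.1, ω.2.2.1, ω.1, ω.2.1))
      ≤ condEnt p (fun ω => ω.2.2.1) (fun ω => (ω.2.1, ω.2.2.2.2.1))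
        + condMutInf p (fun ω => ω.2.2.2.1) (fun ω => ω.2.2.2.2.2)
            (fun ω => (ω.2.2.2.2.1, ω.2.2.1, ω.2.1)) := by
  have hciA := ci_marg hci1
  have hciB := ci_marg hci2
  have f1 : ent p (fun ω => (ω.2.2.2.2.1, ω.2.2.1, ω.1, ω.2.1))
        + ent p (fun ω => (ω.1, ω.2.1))
      = ent p (fun ω => (ω.2.2.2.2.1, ω.1, ω.2.1))
        + ent p (fun ω => (ω.2.2.1, ω.1, ω.2.1)) :=
    ci_ent hp0 _ _ _ hciA
  have f2 : ent p (fun ω => (ω.2.2.2.2.2, (ω.1, ω.2.1), ω.2.2.2.1, ω.2.2.2.2.1))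
        + ent p (fun ω => (ω.2.2.2.1, ω.2.2.2.2.1))
      = ent p (fun ω => (ω.2.2.2.2.2, ω.2.2.2.1, ω.2.2.2.2.1))
        + ent p (fun ω => ((ω.1, ω.2.1), ω.2.2.2.1, ω.2.2.2.2.1)) :=
    ci_ent hp0 _ _ _ hci2
  have f2' : ent p (fun ω => (ω.2.2.2.2.2, ω.2.1, ω.2.2.2.1, ω.2.2.2.2.1))
        + ent p (fun ω => (ω.2.2.2.1, ω.2.2.2.2.1))
      = ent p (fun ω => (ω.2.2.2.2.2, ω.2.2.2.1, ω.2.2.2.2.1))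
        + ent p (fun ω => (ω.2.1, ω.2.2.2.1, ω.2.2.2.2.1)) :=
    ci_ent hp0 _ _ _ hciB
  have f3 : ent p (fun ω => (ω.1, (ω.2.2.2.2.2, ω.2.2.1), ω.2.2.2.2.1, ω.2.1))
        + ent p (fun ω => (ω.2.2.2.2.1, ω.2.1))
      ≤ ent p (fun ω => (ω.1, ω.2.2.2.2.1, ω.2.1))
        + ent p (fun ω => ((ω.2.2.2.2.2, ω.2.2.1), ω.2.2.2.2.1, ω.2.1)) :=
    ssa hp0 hp1 (fun ω => ω.1) (fun ω => (ω.2.2.2.2.2, ω.2.2.1))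
      (fun ω => (ω.2.2.2.2.1, ω.2.1))
  have c1 : ent p (fun ω => ((ω.2.2.2.1, ω.2.2.2.2.2), ω.2.2.2.2.1, ω.2.2.1, ω.1, ω.2.1))
      = ent p (fun ω => (ω.2.2.2.2.2, (ω.1, ω.2.1), ω.2.2.2.1, ω.2.2.2.2.1)) :=
    ent_congr (fun q => (q.1.2, (q.2.2.2, (q.1.1, q.2.1))))
      (fun r => ((r.2.2.1, r.1), (r.2.2.2, (g r.2.1.2 r.2.2.1, r.2.1))))
      (fun ω _ => rfl)
      (fun ω hω => by
        show ((ω.2.2.2.1, ω.2.2.2.2.2), ω.2.2.2.2.1, ω.2.2.1, ω.1, ω.2.1)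
          = ((ω.2.2.2.1, ω.2.2.2.2.2), ω.2.2.2.2.1, g ω.2.1 ω.2.2.2.1, ω.1, ω.2.1)
        rw [hdet ω hω])
  have c2 : ent p (fun ω => (ω.2.2.2.1, ω.2.2.2.2.1, ω.2.2.1, ω.1, ω.2.1))
      = ent p (fun ω => ((ω.1, ω.2.1), ω.2.2.2.1, ω.2.2.2.2.1)) :=
    ent_congr (fun q => (q.2.2.2, (q.1, q.2.1)))
      (fun r => (r.2.1, (r.2.2, (g r.1.2 r.2.1, r.1))))
      (fun ω _ => rfl)
      (fun ω hω => by
        show (ω.2.2.2.1, ω.2.2.2.2.1, ω.2.2.1, ω.1, ω.2.1)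
          = (ω.2.2.2.1, ω.2.2.2.2.1, g ω.2.1 ω.2.2.2.1, ω.1, ω.2.1)
        rw [hdet ω hω])
  have c3 : ent p (fun ω => ((ω.2.2.2.1, ω.2.2.2.2.2), ω.2.2.2.2.1, ω.2.2.1, ω.2.1))
      = ent p (fun ω => (ω.2.2.2.2.2, ω.2.1, ω.2.2.2.1, ω.2.2.2.2.1)) :=
    ent_congr (fun q => (q.1.2, (q.2.2.2, (q.1.1, q.2.1))))
      (fun r => ((r.2.2.1, r.1), (r.2.2.2, (g r.2.1 r.2.2.1, r.2.1))))
      (fun ω _ => rfl)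
      (fun ω hω => by
        show ((ω.2.2.2.1, ω.2.2.2.2.2), ω.2.2.2.2.1, ω.2.2.1, ω.2.1)
          = ((ω.2.2.2.1, ω.2.2.2.2.2), ω.2.2.2.2.1, g ω.2.1 ω.2.2.2.1, ω.2.1)
        rw [hdet ω hω])
  have c4 : ent p (fun ω => (ω.2.2.2.1, ω.2.2.2.2.1, ω.2.2.1, ω.2.1))
      = ent p (fun ω => (ω.2.1, ω.2.2.2.1, ω.2.2.2.2.1)) :=
    ent_congr (fun q => (q.2.2.2, (q.1, q.2.1)))
      (fun r => (r.2.1, (r.2.2, (g r.1 r.2.1, r.1))))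
      (fun ω _ => rfl)
      (fun ω hω => by
        show (ω.2.2.2.1, ω.2.2.2.2.1, ω.2.2.1, ω.2.1)
          = (ω.2.2.2.1, ω.2.2.2.2.1, g ω.2.1 ω.2.2.2.1, ω.2.1)
        rw [hdet ω hω])
  have c5 : ent p (fun ω => (ω.2.2.1, ω.2.1, ω.2.2.2.2.1))
      = ent p (fun ω => (ω.2.2.2.2.1, ω.2.2.1, ω.2.1)) :=
    ent_congr (fun q => (q.2.2, (q.1, q.2.1))) (fun r => (r.2.1, (r.2.2, r.1)))
      (fun ω _ => rfl) (fun ω _ => rfl)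
  have c6 : ent p (fun ω => (ω.2.2.2.2.2, ω.2.2.2.2.1, ω.2.2.1, ω.1, ω.2.1))
      = ent p (fun ω => (ω.1, (ω.2.2.2.2.2, ω.2.2.1), ω.2.2.2.2.1, ω.2.1)) :=
    ent_congr (fun q => (q.2.2.2.1, ((q.1, q.2.2.1), (q.2.1, q.2.2.2.2))))
      (fun r => (r.2.1.1, (r.2.2.1, (r.2.1.2, (r.1, r.2.2.2)))))
      (fun ω _ => rfl) (fun ω _ => rfl)
  have c7 : ent p (fun ω => (ω.2.2.2.2.1, ω.1, ω.2.1))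
      = ent p (fun ω => (ω.1, ω.2.2.2.2.1, ω.2.1)) :=
    ent_congr (fun q => (q.2.1, (q.1, q.2.2))) (fun r => (r.2.1, (r.1, r.2.2)))
      (fun ω _ => rfl) (fun ω _ => rfl)
  have c8 : ent p (fun ω => (ω.2.2.2.2.2, ω.2.2.2.2.1, ω.2.2.1, ω.2.1))
      = ent p (fun ω => ((ω.2.2.2.2.2, ω.2.2.1), ω.2.2.2.2.1, ω.2.1)) :=
    ent_congr (fun q => ((q.1, q.2.2.1), (q.2.1, q.2.2.2)))
      (fun r => (r.1.1, (r.2.1, (r.1.2, r.2.2))))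
      (fun ω _ => rfl) (fun ω _ => rfl)
  have c9 : ent p (fun ω => (ω.2.1, ω.2.2.2.2.1))
      = ent p (fun ω => (ω.2.2.2.2.1, ω.2.1)) :=
    ent_congr (fun q => (q.2, q.1)) (fun r => (r.2, r.1))
      (fun ω _ => rfl) (fun ω _ => rfl)
  simp only [condMutInf, condEnt]
  linarith [f1, f2, f2', f3, c1, c2, c3, c4, c5, c6, c7, c8, c9]
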